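/- Let G = H[G_v : v ∈ V(H)] be an inflation of a graph H by nonempty graphs G_v, and suppose G contains no induced subgraph isomorphic to pK₂ and no induced subgraph isomorphic to the complement of qK₂. Let A = {v ∈ V(H) : G_v is neither a complete graph nor an edgeless graph}. Then the induced subgraph H[A] contains no clique of size q and no independent set of size p. -/

import Mathlib

/-- The matching `mK₂`: the disjoint union of `m` single edges. -/
def matchingGraph (m : ℕ) : SimpleGraph (Fin m × Fin 2) where
  Adj a b := a.1 = b.1 ∧ a.2 ≠ b.2
  symm := ⟨by rintro a b ⟨h1, h2⟩; exact ⟨h1.symm, h2.symm⟩⟩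
  loopless := ⟨by rintro a ⟨h1, h2⟩; exact h2 rfl⟩

/-- `G` is (isomorphic to) the inflation `H[G_v : v ∈ V(H)]`, witnessed by the
surjection `φ` sending each vertex of `G` to the vertex of `H` it inflates:
the (nonempty) graphs `G_v` are the induced subgraphs on the fibers of `φ`,
and between different fibers the adjacency is governed by `H`. -/
def IsInflation {V U : Type*} (G : SimpleGraph V) (H : SimpleGraph U) (φ : V → U) : Prop :=
  Function.Surjective φ ∧ ∀ u v : V, φ u ≠ φ v → (G.Adj u v ↔ H.Adj (φ u) (φ v))

/-- In an inflation `G = H[G_v]` with no induced `pK₂` and no induced `(qK₂)ᶜ`,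
the set `A` of vertices of `H` inflated by non-homogeneous modules (fibers that
are neither complete nor edgeless) spans no clique of size `q` and no
independent set of size `p` in `H`. -/

lemma fin_two_cases (c : Fin 2) : c = 0 ∨ c = 1 := by
  rcases c with ⟨_ | _ | n, hc⟩
  · exact Or.inl rfl
  · exact Or.inr rfl
  · omega

lemma matching_compl_adj (m : ℕ) (a b : Fin m × Fin 2) :
    ((matchingGraph m)ᶜ).Adj a b ↔ a.1 ≠ b.1 := by
  constructor
  · rintro ⟨hne, hnadj⟩ h1
    have h2 : a.2 = b.2 := by
      by_contra h2
      exact hnadj ⟨h1, h2⟩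
    exact hne (Prod.ext h1 h2)
  · intro h
    exact ⟨fun hE => h (congrArg Prod.fst hE), fun hadj => h hadj.1⟩

theorem nonhomogeneous_modules_ramsey (V U : Type) [Fintype V] [Fintype U]
    (G : SimpleGraph V) (H : SimpleGraph U) (φ : V → U)
    (hinf : IsInflation G H φ) (p q : ℕ)
    (hp : IsEmpty (matchingGraph p ↪g G))
    (hq : IsEmpty ((matchingGraph q)ᶜ ↪g G))
    (A : Set U)
    (hA : A = {u : U | (∃ x y : V, φ x = u ∧ φ y = u ∧ G.Adj x y) ∧
      (∃ x y : V, φ x = u ∧ φ y = u ∧ x ≠ y ∧ ¬ G.Adj x y)}) :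
    (¬ ∃ S : Finset U, ↑S ⊆ A ∧ S.card = q ∧ H.IsClique ↑S) ∧
      (¬ ∃ S : Finset U, ↑S ⊆ A ∧ S.card = p ∧
        (∀ u ∈ S, ∀ v ∈ S, u ≠ v → ¬ H.Adj u v)) := by
  obtain ⟨hsurj, hadj⟩ := hinf
  subst hA
  constructor
  · rintro ⟨S, hSA, hcard, hclique⟩
    apply hq.false
    let e : Fin q ≃ {x // x ∈ S} := (S.equivFinOfCardEq hcard).symm
    have hex : ∀ i : Fin q, ∃ x y : V, φ x = (e i : U) ∧ φ y = (e i : U) ∧ x ≠ y ∧ ¬ G.Adj x y :=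
      fun i => (hSA (e i).2).2
    choose x y hx hy hxy hnadj using hex
    have hei : ∀ i j : Fin q, (e i : U) = (e j : U) → i = j :=
      fun i j h => e.injective (Subtype.coe_injective h)
    let f : Fin q × Fin 2 → V := fun a => if a.2 = 0 then x a.1 else y a.1
    have hf0 : ∀ i, f (i, 0) = x i := fun i => by simp [f]
    have hf1 : ∀ i, f (i, 1) = y i := fun i => by simp [f]
    have hφf : ∀ a : Fin q × Fin 2, φ (f a) = (e a.1 : U) := by
      rintro ⟨i, c⟩
      rcases fin_two_cases c with rfl | rfl
      · rw [hf0]; exact hx i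
      · rw [hf1]; exact hy i
    have hinj : Function.Injective f := by
      rintro ⟨i, c⟩ ⟨j, d⟩ hfe
      have hij : i = j := hei _ _ (by rw [← hφf (i, c), ← hφf (j, d), hfe])
      subst hij
      suffices hcd : c = d by rw [hcd]
      by_contra hcd
      rcases fin_two_cases c with rfl | rfl <;> rcases fin_two_cases d with rfl | rfl <;> first
        | exact hcd rfl
        | (rw [hf0 i, hf1 i] at hfe; exact hxy i hfe)
        | (rw [hf1 i, hf0 i] at hfe; exact hxy i hfe.symm)
    refine ⟨⟨f, hinj⟩, ?_⟩
    rintro ⟨i, c⟩ ⟨j, d⟩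
    simp only [Function.Embedding.coeFn_mk, matching_compl_adj, ne_eq]
    constructor
    · intro hGA hij
      subst hij
      rcases fin_two_cases c with rfl | rfl <;> rcases fin_two_cases d with rfl | rfl
      · exact G.loopless.irrefl _ hGA
      · rw [hf0, hf1] at hGA; exact hnadj i hGA
      · rw [hf1, hf0] at hGA; exact hnadj i hGA.symm
      · exact G.loopless.irrefl _ hGA
    · intro hij
      have hne : (e i : U) ≠ (e j : U) := fun h => hij (hei _ _ h)
      have hφne : φ (f (i, c)) ≠ φ (f (j, d)) := by rw [hφf, hφf]; exact hne
      rw [hadj _ _ hφne, hφf, hφf]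
      exact hclique (Finset.mem_coe.mpr (e i).2) (Finset.mem_coe.mpr (e j).2) hne
  · rintro ⟨S, hSA, hcard, hindep⟩
    apply hp.false
    let e : Fin p ≃ {x // x ∈ S} := (S.equivFinOfCardEq hcard).symm
    have hex : ∀ i : Fin p, ∃ x y : V, φ x = (e i : U) ∧ φ y = (e i : U) ∧ G.Adj x y :=
      fun i => (hSA (e i).2).1
    choose x y hx hy hGxy using hex
    have hxy : ∀ i, x i ≠ y i := fun i => (hGxy i).ne
    have hei : ∀ i j : Fin p, (e i : U) = (e j : U) → i = j :=
      fun i j h => e.injective (Subtype.coe_injective h)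
    let f : Fin p × Fin 2 → V := fun a => if a.2 = 0 then x a.1 else y a.1
    have hf0 : ∀ i, f (i, 0) = x i := fun i => by simp [f]
    have hf1 : ∀ i, f (i, 1) = y i := fun i => by simp [f]
    have hφf : ∀ a : Fin p × Fin 2, φ (f a) = (e a.1 : U) := by
      rintro ⟨i, c⟩
      rcases fin_two_cases c with rfl | rfl
      · rw [hf0]; exact hx i
      · rw [hf1]; exact hy i
    have hinj : Function.Injective f := by
      rintro ⟨i, c⟩ ⟨j, d⟩ hfe
      have hij : i = j := hei _ _ (by rw [← hφf (i, c), ← hφf (j, d), hfe])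
      subst hij
      suffices hcd : c = d by rw [hcd]
      by_contra hcd
      rcases fin_two_cases c with rfl | rfl <;> rcases fin_two_cases d with rfl | rfl <;> first
        | exact hcd rfl
        | (rw [hf0 i, hf1 i] at hfe; exact hxy i hfe)
        | (rw [hf1 i, hf0 i] at hfe; exact hxy i hfe.symm)
    refine ⟨⟨f, hinj⟩, ?_⟩
    rintro ⟨i, c⟩ ⟨j, d⟩
    show G.Adj (f (i, c)) (f (j, d)) ↔ (i = j ∧ c ≠ d)
    constructor
    · intro hGA
      have hij : i = j := by
        by_contra hij
        have hne : (e i : U) ≠ (e j : U) := fun h => hij (hei _ _ h)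
        have hφne : φ (f (i, c)) ≠ φ (f (j, d)) := by rw [hφf, hφf]; exact hne
        rw [hadj _ _ hφne, hφf, hφf] at hGA
        exact hindep _ (e i).2 _ (e j).2 hne hGA
      subst hij
      refine ⟨rfl, fun hcd => ?_⟩
      subst hcd
      exact G.loopless.irrefl _ hGA
    · rintro ⟨hij, hcd⟩
      subst hij
      rcases fin_two_cases c with rfl | rfl <;> rcases fin_two_cases d with rfl | rfl
      · exact absurd rfl hcd
      · rw [hf0, hf1]; exact hGxy i
      · rw [hf1, hf0]; exact (hGxy i).symm
      · exact absurd rfl hcd
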